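/- Let ν ∈ ℝ and τ ≥ 2. Then the function R(t) = sinh(τ·arsinh(t) − ν) satisfies R'''(t) ≥ 0 for all t ∈ ℝ. Equivalently, [(τ²+2)t² + τ² − 1]·cosh(τ·arsinh(t) − ν) ≥ 3τ·t·√(1+t²)·sinh(τ·arsinh(t) − ν) for all t ∈ ℝ. -/

import Mathlib

open Real

/-- For `ν ∈ ℝ` and `τ ≥ 2`, `R t = sinh(τ·arsinh t − ν)`
satisfies `R''' ≥ 0` everywhere; equivalently,
`[(τ²+2)t² + τ² − 1]·cosh(τ·arsinh t − ν) ≥ 3τt√(1+t²)·sinh(τ·arsinh t − ν)`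
for all `t ∈ ℝ`. -/
theorem stmt17 (ν τ : ℝ) (hτ : 2 ≤ τ) :
    (∀ t : ℝ,
      0 ≤ deriv (deriv (deriv (fun s : ℝ => Real.sinh (τ * Real.arsinh s - ν)))) t) ∧
    (∀ t : ℝ,
      3 * τ * t * Real.sqrt (1 + t^2) * Real.sinh (τ * Real.arsinh t - ν)
        ≤ ((τ^2 + 2) * t^2 + τ^2 - 1) * Real.cosh (τ * Real.arsinh t - ν)) := by
  have hineq : ∀ t : ℝ,
      3 * τ * t * Real.sqrt (1 + t^2) * Real.sinh (τ * Real.arsinh t - ν)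
        ≤ ((τ^2 + 2) * t^2 + τ^2 - 1) * Real.cosh (τ * Real.arsinh t - ν) := by
    intro t
    set q := Real.sqrt (1 + t^2) with hqdef
    set s := Real.sinh (τ * Real.arsinh t - ν) with hsdef
    set c := Real.cosh (τ * Real.arsinh t - ν) with hcdef
    have hq0 : 0 ≤ q := Real.sqrt_nonneg _
    have hq2 : q^2 = 1 + t^2 := Real.sq_sqrt (by positivity)
    have hcs : c^2 - s^2 = 1 := Real.cosh_sq_sub_sinh_sq _
    have hc0 : 0 < c := Real.cosh_pos _
    have hsc : |s| ≤ c := by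
      have h1 : s^2 ≤ c^2 := by nlinarith
      calc |s| = Real.sqrt (s^2) := (Real.sqrt_sq_eq_abs s).symm
        _ ≤ Real.sqrt (c^2) := Real.sqrt_le_sqrt h1
        _ = c := Real.sqrt_sq hc0.le
    have hA0 : 0 ≤ (τ^2+2)*t^2 + τ^2 - 1 := by nlinarith [sq_nonneg t]
    have hτ4 : 0 ≤ τ^2 - 4 := by nlinarith
    have hsq : (3*τ*|t| * q)^2 ≤ ((τ^2+2)*t^2 + τ^2 - 1)^2 := by
      have h1 : (3*τ*|t| * q)^2 = 9*τ^2*t^2*(1+t^2) := by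
        rw [mul_pow, mul_pow, mul_pow, sq_abs, hq2]; ring
      rw [h1]
      nlinarith [mul_nonneg (mul_nonneg hτ4 (by nlinarith : (0:ℝ) ≤ τ^2-1)) (sq_nonneg (t^2)),
        mul_nonneg (mul_nonneg hτ4 (by nlinarith : (0:ℝ) ≤ 2*τ^2+1)) (sq_nonneg t),
        sq_nonneg (τ^2-1)]
    have h1 : 3*τ*|t| * q ≤ (τ^2+2)*t^2 + τ^2 - 1 := by
      have hl : 0 ≤ 3*τ*|t| * q := by
        have : (0:ℝ) ≤ 3*τ := by linarith
        positivity
      nlinarith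
    calc 3*τ*t*q*s ≤ |3*τ*t*q*s| := le_abs_self _
      _ = 3*τ*|t| * q * |s| := by
          rw [abs_mul, abs_mul, abs_mul,
            abs_of_nonneg (by linarith : (0:ℝ) ≤ 3*τ), abs_of_nonneg hq0]
      _ ≤ ((τ^2+2)*t^2 + τ^2 - 1) * c := mul_le_mul h1 hsc (abs_nonneg _) hA0
  refine ⟨?_, hineq⟩
  intro t
  -- abbreviations
  set F : ℝ → ℝ := fun y => Real.sinh (τ * Real.arsinh y - ν) with hF
  set R1 : ℝ → ℝ := fun y =>
    τ * Real.cosh (τ * Real.arsinh y - ν) / Real.sqrt (1 + y^2) with hR1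
  set R2 : ℝ → ℝ := fun y =>
    τ^2 * Real.sinh (τ * Real.arsinh y - ν) / (Real.sqrt (1 + y^2))^2
      - τ * y * Real.cosh (τ * Real.arsinh y - ν) / (Real.sqrt (1 + y^2))^3 with hR2
  set R3 : ℝ → ℝ := fun y =>
    ((τ^3 - τ) * (Real.sqrt (1 + y^2))^2 + 3*τ*y^2) * Real.cosh (τ * Real.arsinh y - ν)
        / (Real.sqrt (1 + y^2))^5
      - 3*τ^2*y * Real.sinh (τ * Real.arsinh y - ν) / (Real.sqrt (1 + y^2))^4 with hR3
  have hqpos : ∀ x : ℝ, 0 < Real.sqrt (1 + x^2) := fun x => Real.sqrt_pos.mpr (by positivity)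
  have hqne : ∀ x : ℝ, Real.sqrt (1 + x^2) ≠ 0 := fun x => (hqpos x).ne'
  have hf : ∀ x : ℝ, HasDerivAt (fun y : ℝ => τ * Real.arsinh y - ν)
      (τ * (Real.sqrt (1 + x^2))⁻¹) x := fun x =>
    ((Real.hasDerivAt_arsinh x).const_mul τ).sub_const ν
  have hq' : ∀ x : ℝ, HasDerivAt (fun y : ℝ => Real.sqrt (1 + y^2))
      (x / Real.sqrt (1 + x^2)) x := by
    intro x
    have hpoly : HasDerivAt (fun y : ℝ => 1 + y^2) (2*x) x := by
      simpa using ((hasDerivAt_pow 2 x).const_add 1)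
    have h := (Real.hasDerivAt_sqrt (by positivity : (1:ℝ) + x^2 ≠ 0)).comp x hpoly
    refine h.congr_deriv ?_
    symm
    field_simp
  have h01 : ∀ x : ℝ, HasDerivAt F (R1 x) x := by
    intro x
    have h := (hf x).sinh
    refine h.congr_deriv ?_
    symm
    simp only [hR1]
    have hne := hqne x
    generalize Real.sqrt (1 + x^2) = qq at hne ⊢
    field_simp
  have h12 : ∀ x : ℝ, HasDerivAt R1 (R2 x) x := by
    intro x
    have hnum : HasDerivAt (fun y : ℝ => τ * Real.cosh (τ * Real.arsinh y - ν))
        (τ * (Real.sinh (τ * Real.arsinh x - ν) * (τ * (Real.sqrt (1 + x^2))⁻¹))) x :=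
      ((hf x).cosh).const_mul τ
    have h := hnum.div (hq' x) (hqne x)
    refine h.congr_deriv ?_
    symm
    simp only [hR2]
    have hne := hqne x
    generalize Real.sqrt (1 + x^2) = qq at hne ⊢
    field_simp
  have h23 : ∀ x : ℝ, HasDerivAt R2 (R3 x) x := by
    intro x
    have hA : HasDerivAt (fun y : ℝ => τ^2 * Real.sinh (τ * Real.arsinh y - ν))
        (τ^2 * (Real.cosh (τ * Real.arsinh x - ν) * (τ * (Real.sqrt (1 + x^2))⁻¹))) x :=
      ((hf x).sinh).const_mul (τ^2)
    have hq2pow : HasDerivAt (fun y : ℝ => (Real.sqrt (1 + y^2))^2)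
        (2 * (Real.sqrt (1 + x^2))^1 * (x / Real.sqrt (1 + x^2))) x := (hq' x).pow 2
    have hq3pow : HasDerivAt (fun y : ℝ => (Real.sqrt (1 + y^2))^3)
        (3 * (Real.sqrt (1 + x^2))^2 * (x / Real.sqrt (1 + x^2))) x := (hq' x).pow 3
    have hB : HasDerivAt (fun y : ℝ => τ * y * Real.cosh (τ * Real.arsinh y - ν))
        (τ * 1 * Real.cosh (τ * Real.arsinh x - ν)
          + τ * x * (Real.sinh (τ * Real.arsinh x - ν) * (τ * (Real.sqrt (1 + x^2))⁻¹))) x := by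
      have := ((hasDerivAt_id x).const_mul τ).mul ((hf x).cosh)
      exact this
    have h := (hA.div hq2pow (pow_ne_zero 2 (hqne x))).sub
      (hB.div hq3pow (pow_ne_zero 3 (hqne x)))
    refine h.congr_deriv ?_
    symm
    simp only [hR3]
    have hne := hqne x
    generalize Real.sqrt (1 + x^2) = qq at hne ⊢
    field_simp
    ring
  have e1 : deriv F = R1 := funext fun x => (h01 x).deriv
  have e2 : deriv (deriv F) = R2 := by rw [e1]; exact funext fun x => (h12 x).deriv
  have e3 : deriv (deriv (deriv F)) t = R3 t := by rw [e2]; exact (h23 t).deriv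
  show 0 ≤ deriv (deriv (deriv F)) t
  rw [e3]
  have hq2t : (Real.sqrt (1 + t^2))^2 = 1 + t^2 := Real.sq_sqrt (by positivity)
  have key := hineq t
  have hτ0 : (0:ℝ) < τ := by linarith
  have hnum : 0 ≤ ((τ^3 - τ) * (Real.sqrt (1 + t^2))^2 + 3*τ*t^2)
      * Real.cosh (τ * Real.arsinh t - ν)
      - 3*τ^2*t * Real.sqrt (1 + t^2) * Real.sinh (τ * Real.arsinh t - ν) := by
    rw [hq2t]
    nlinarith [mul_le_mul_of_nonneg_left key hτ0.le]
  have hrw : R3 t = (((τ^3 - τ) * (Real.sqrt (1 + t^2))^2 + 3*τ*t^2)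
      * Real.cosh (τ * Real.arsinh t - ν)
      - 3*τ^2*t * Real.sqrt (1 + t^2) * Real.sinh (τ * Real.arsinh t - ν))
      / (Real.sqrt (1 + t^2))^5 := by
    simp only [hR3]
    have hne := hqne t
    generalize Real.sqrt (1 + t^2) = qq at hne ⊢
    field_simp
  rw [hrw]
  exact div_nonneg hnum (by positivity)
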